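/- The functions Q_1 and Q_2 defined by quotients of integrals over the unit disc satisfy Q_2(λ) = 1 − Q_1(1/λ) for all λ ∈ (0,∞), where Q_1(λ) = 3·(∬_{D} s²t²/(s²+λ²t²)^{3/2} ds dt)/(∬_{D} s²/(s²+λ²t²)^{3/2} ds dt) and Q_2(λ) = 3·(∬_{D} t⁴/(s²+λ²t²)^{3/2} ds dt)/(∬_{D} t²/(s²+λ²t²)^{3/2} ds dt), D being the closed unit disc {(s,t) : s²+t² ≤ 1}. -/

import Mathlib

open MeasureTheory Real Set

/-- The closed unit disc in ℝ². -/
def unitDisc : Set (ℝ × ℝ) := {q : ℝ × ℝ | q.1 ^ 2 + q.2 ^ 2 ≤ 1}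

lemma X_pos {l : ℝ} (hl : 0 < l) (θ : ℝ) : 0 < cos θ ^ 2 + l ^ 2 * sin θ ^ 2 := by
  rcases eq_or_ne (sin θ) 0 with h | h
  · have := sin_sq_add_cos_sq θ
    rw [h] at this; nlinarith
  · have h2 : 0 < sin θ ^ 2 := by positivity
    nlinarith [sq_nonneg (cos θ), mul_pos (pow_pos hl 2) h2]

lemma angular_cont {l : ℝ} (hl : 0 < l) (w : ℝ × ℝ → ℝ) (hw : Continuous w) :
    Continuous fun θ : ℝ => w (cos θ, sin θ) / (cos θ ^ 2 + l ^ 2 * sin θ ^ 2) ^ ((3:ℝ)/2) := by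
  apply Continuous.div
  · exact hw.comp (by fun_prop)
  · apply Continuous.rpow_const (by fun_prop)
    intro θ; exact Or.inl (X_pos hl θ).ne'
  · intro θ; exact (Real.rpow_pos_of_pos (X_pos hl θ) _).ne'

lemma polar_reduce {l : ℝ} (hl : 0 < l) (w : ℝ × ℝ → ℝ) (hw : Continuous w) (e : ℕ)
    (hhom : ∀ r x y : ℝ, w (r * x, r * y) = r ^ (e + 2) * w (x, y)) :
    ∫ p in unitDisc, w p / (p.1 ^ 2 + l ^ 2 * p.2 ^ 2) ^ ((3:ℝ)/2)
      = ((e : ℝ) + 1)⁻¹ *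
        ∫ θ in Ioo (-π) π, w (cos θ, sin θ) / (cos θ ^ 2 + l ^ 2 * sin θ ^ 2) ^ ((3:ℝ)/2) := by
  have hD : MeasurableSet unitDisc :=
    (isClosed_le (by fun_prop) continuous_const).measurableSet
  set f : ℝ × ℝ → ℝ := fun p => w p / (p.1 ^ 2 + l ^ 2 * p.2 ^ 2) ^ ((3:ℝ)/2) with hf
  set G : ℝ × ℝ → ℝ :=
    fun p => p.1 ^ e * (w (cos p.2, sin p.2) / (cos p.2 ^ 2 + l ^ 2 * sin p.2 ^ 2) ^ ((3:ℝ)/2))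
    with hG
  have hGcont : Continuous G := by
    exact (continuous_fst.pow e).mul ((angular_cont hl w hw).comp continuous_snd)
  have hrect : MeasurableSet (Ioc (0:ℝ) 1 ×ˢ Ioo (-π) π) :=
    measurableSet_Ioc.prod measurableSet_Ioo
  have step1 : (∫ p in polarCoord.target, p.1 • (unitDisc.indicator f) (polarCoord.symm p))
      = ∫ p in Ioc (0:ℝ) 1 ×ˢ Ioo (-π) π, G p := by
    rw [setIntegral_congr_fun (polarCoord.open_target.measurableSet)
      (g := (Ioc (0:ℝ) 1 ×ˢ Ioo (-π) π).indicator G)]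
    · rw [setIntegral_indicator hrect]
      congr 1
      rw [show polarCoord.target = Ioi (0:ℝ) ×ˢ Ioo (-π) π from rfl]
      exact congrArg volume.restrict (inter_eq_right.mpr (prod_mono (Ioc_subset_Ioi_self : Ioc (0:ℝ) 1 ⊆ Ioi 0) (subset_refl (Ioo (-π) π))))
    · rintro ⟨r, θ⟩ hp
      rw [show polarCoord.target = Ioi (0:ℝ) ×ˢ Ioo (-π) π from rfl] at hp
      obtain ⟨hr, hθ⟩ := hp
      simp only [mem_Ioi] at hr
      dsimp only
      have hsymm : polarCoord.symm (r, θ) = (r * cos θ, r * sin θ) := rfl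
      have hden : (r * cos θ) ^ 2 + l ^ 2 * (r * sin θ) ^ 2
          = r ^ 2 * (cos θ ^ 2 + l ^ 2 * sin θ ^ 2) := by ring
      have hr3 : ((r ^ 2 : ℝ)) ^ ((3:ℝ)/2) = r ^ 3 := by
        rw [← Real.rpow_natCast r 2, ← Real.rpow_mul hr.le]
        norm_num
      by_cases hr1 : r ≤ 1
      · have hmem : (r * cos θ, r * sin θ) ∈ unitDisc := by
          simp only [unitDisc, mem_setOf_eq]
          have hs := sin_sq_add_cos_sq θ
          nlinarith
        have hmem2 : ((r, θ) : ℝ × ℝ) ∈ Ioc (0:ℝ) 1 ×ˢ Ioo (-π) π := ⟨⟨hr, hr1⟩, hθ⟩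
        rw [hsymm, indicator_of_mem hmem, indicator_of_mem hmem2]
        simp only [hf, hG, smul_eq_mul]
        rw [hden, Real.mul_rpow (sq_nonneg r) (X_pos hl θ).le, hr3, hhom r (cos θ) (sin θ)]
        have hY : (cos θ ^ 2 + l ^ 2 * sin θ ^ 2) ^ ((3:ℝ)/2) ≠ 0 :=
          (Real.rpow_pos_of_pos (X_pos hl θ) _).ne'
        field_simp
        ring
      · have hmem : (r * cos θ, r * sin θ) ∉ unitDisc := by
          simp only [unitDisc, mem_setOf_eq, not_le]
          have hs := sin_sq_add_cos_sq θ
          nlinarith [not_le.mp hr1]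
        have hmem2 : ((r, θ) : ℝ × ℝ) ∉ Ioc (0:ℝ) 1 ×ˢ Ioo (-π) π := by
          rintro ⟨⟨_, h1⟩, _⟩; exact hr1 h1
        rw [hsymm, indicator_of_notMem hmem, indicator_of_notMem hmem2, smul_zero]
  have hint : IntegrableOn G (Ioc (0:ℝ) 1 ×ˢ Ioo (-π) π) (volume.prod volume) := by
    rw [← Measure.volume_eq_prod]
    refine (hGcont.continuousOn.integrableOn_compact
      (isCompact_Icc.prod isCompact_Icc : IsCompact (Icc (0:ℝ) 1 ×ˢ Icc (-π) π))).mono_set ?_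
    exact prod_mono Ioc_subset_Icc_self Ioo_subset_Icc_self
  calc ∫ p in unitDisc, f p = ∫ p, (unitDisc.indicator f) p := (integral_indicator hD).symm
    _ = ∫ p in polarCoord.target, p.1 • (unitDisc.indicator f) (polarCoord.symm p) :=
        (integral_comp_polarCoord_symm _).symm
    _ = ∫ p in Ioc (0:ℝ) 1 ×ˢ Ioo (-π) π, G p := step1
    _ = ∫ r in Ioc (0:ℝ) 1, ∫ θ in Ioo (-π) π, G (r, θ) := by
        rw [MeasureTheory.Measure.volume_eq_prod]
        exact setIntegral_prod G hint
    _ = ((e : ℝ) + 1)⁻¹ *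
        ∫ θ in Ioo (-π) π, w (cos θ, sin θ) / (cos θ ^ 2 + l ^ 2 * sin θ ^ 2) ^ ((3:ℝ)/2) := by
        simp only [hG]
        rw [show (∫ r in Ioc (0:ℝ) 1, ∫ θ in Ioo (-π) π,
            r ^ e * (w (cos θ, sin θ) / (cos θ ^ 2 + l ^ 2 * sin θ ^ 2) ^ ((3:ℝ)/2)))
            = ∫ r in Ioc (0:ℝ) 1, r ^ e *
              ∫ θ in Ioo (-π) π, w (cos θ, sin θ) / (cos θ ^ 2 + l ^ 2 * sin θ ^ 2) ^ ((3:ℝ)/2)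
            from by simp_rw [integral_const_mul]]
        rw [integral_mul_const]
        congr 1
        rw [← intervalIntegral.integral_of_le zero_le_one, integral_pow]
        simp

lemma unitDisc_swap_integral (f : ℝ × ℝ → ℝ) :
    ∫ p in unitDisc, f (p.2, p.1) = ∫ p in unitDisc, f p := by
  have hmp : MeasurePreserving (Prod.swap : ℝ × ℝ → ℝ × ℝ) volume volume := by
    rw [Measure.volume_eq_prod]
    exact Measure.measurePreserving_swap
  have hemb : MeasurableEmbedding (Prod.swap : ℝ × ℝ → ℝ × ℝ) :=
    MeasurableEquiv.prodComm.measurableEmbedding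
  have hpre : (Prod.swap : ℝ × ℝ → ℝ × ℝ) ⁻¹' unitDisc = unitDisc := by
    ext p
    simp only [unitDisc, mem_preimage, mem_setOf_eq, Prod.fst_swap, Prod.snd_swap]
    constructor <;> intro h <;> linarith
  calc ∫ p in unitDisc, f (p.2, p.1)
      = ∫ p in (Prod.swap : ℝ × ℝ → ℝ × ℝ) ⁻¹' unitDisc, f (Prod.swap p) := by rw [hpre]; rfl
    _ = ∫ p in unitDisc, f p := hmp.setIntegral_preimage_emb hemb f unitDisc

/-- Coefficient function Q₁ arising in the PDE approximated by L¹ median filtering. -/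
noncomputable def Q₁ (l : ℝ) : ℝ :=
  3 * (∫ p in unitDisc, p.1 ^ 2 * p.2 ^ 2 / (p.1 ^ 2 + l ^ 2 * p.2 ^ 2) ^ ((3 : ℝ) / 2)) /
    (∫ p in unitDisc, p.1 ^ 2 / (p.1 ^ 2 + l ^ 2 * p.2 ^ 2) ^ ((3 : ℝ) / 2))

/-- Coefficient function Q₂ arising in the PDE approximated by L¹ median filtering. -/
noncomputable def Q₂ (l : ℝ) : ℝ :=
  3 * (∫ p in unitDisc, p.2 ^ 4 / (p.1 ^ 2 + l ^ 2 * p.2 ^ 2) ^ ((3 : ℝ) / 2)) /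
    (∫ p in unitDisc, p.2 ^ 2 / (p.1 ^ 2 + l ^ 2 * p.2 ^ 2) ^ ((3 : ℝ) / 2))

/-- The identity Q₂(λ) = 1 − Q₁(1/λ) for all λ ∈ (0, ∞). -/
theorem Q₂_eq_one_sub_Q₁_inv (l : ℝ) (hl : 0 < l) : Q₂ l = 1 - Q₁ l⁻¹ := by
  have hl3 : (l : ℝ) ^ 3 ≠ 0 := pow_ne_zero 3 hl.ne'
  -- scaling: denominators with l⁻¹ turn into l² on the other side
  have hscale : ∀ a : ℝ, ∀ p : ℝ × ℝ, 0 ≤ a →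
      a / (p.1 ^ 2 + (l⁻¹) ^ 2 * p.2 ^ 2) ^ ((3:ℝ)/2)
        = l ^ 3 * (a / (l ^ 2 * p.1 ^ 2 + p.2 ^ 2) ^ ((3:ℝ)/2)) := by
    intro a p _
    have h1 : p.1 ^ 2 + (l⁻¹) ^ 2 * p.2 ^ 2 = (l ^ 2)⁻¹ * (l ^ 2 * p.1 ^ 2 + p.2 ^ 2) := by
      field_simp
    have h2 : ((l ^ 2 : ℝ))⁻¹ ^ ((3:ℝ)/2) = (l ^ 3)⁻¹ := by
      rw [← Real.rpow_neg_one (l ^ 2), ← Real.rpow_natCast l 2, ← Real.rpow_mul hl.le,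
        ← Real.rpow_mul hl.le, ← Real.rpow_neg_one (l ^ 3), ← Real.rpow_natCast l 3,
        ← Real.rpow_mul hl.le]
      norm_num
    rw [h1, Real.mul_rpow (by positivity) (by positivity), h2, div_eq_mul_inv, mul_inv,
      inv_inv, div_eq_mul_inv]
    ring
  have hD : MeasurableSet unitDisc :=
    (isClosed_le (by fun_prop) continuous_const).measurableSet
  set Y : ℝ → ℝ := fun θ => (cos θ ^ 2 + l ^ 2 * sin θ ^ 2) ^ ((3:ℝ)/2) with hY
  have hYpos : ∀ θ, 0 < Y θ := fun θ => Real.rpow_pos_of_pos (X_pos hl θ) _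
  set I2 : ℝ := ∫ θ in Ioo (-π) π, sin θ ^ 2 / Y θ with hI2
  set I22 : ℝ := ∫ θ in Ioo (-π) π, cos θ ^ 2 * sin θ ^ 2 / Y θ with hI22
  set I4 : ℝ := ∫ θ in Ioo (-π) π, sin θ ^ 4 / Y θ with hI4
  -- polar reductions
  have hE : (∫ p in unitDisc, p.2 ^ 4 / (p.1 ^ 2 + l ^ 2 * p.2 ^ 2) ^ ((3:ℝ)/2))
      = 1/3 * I4 := by
    have h := polar_reduce hl (fun p => p.2 ^ 4) (by fun_prop) 2
      (fun r x y => by dsimp only; ring)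
    norm_num at h
    exact h
  have hDen : (∫ p in unitDisc, p.2 ^ 2 / (p.1 ^ 2 + l ^ 2 * p.2 ^ 2) ^ ((3:ℝ)/2)) = I2 := by
    have h := polar_reduce hl (fun p => p.2 ^ 2) (by fun_prop) 0
      (fun r x y => by dsimp only; ring)
    norm_num at h
    exact h
  have hC : (∫ p in unitDisc, p.1 ^ 2 * p.2 ^ 2 / (p.1 ^ 2 + l ^ 2 * p.2 ^ 2) ^ ((3:ℝ)/2))
      = 1/3 * I22 := by
    have h := polar_reduce hl (fun p => p.1 ^ 2 * p.2 ^ 2) (by fun_prop) 2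
      (fun r x y => by dsimp only; ring)
    norm_num at h
    exact h
  -- numerator of Q₁ l⁻¹
  have hN1 : (∫ p in unitDisc, p.1 ^ 2 * p.2 ^ 2 / (p.1 ^ 2 + (l⁻¹) ^ 2 * p.2 ^ 2) ^ ((3:ℝ)/2))
      = l ^ 3 * (1/3 * I22) := by
    rw [setIntegral_congr_fun hD (g := fun p : ℝ × ℝ =>
        l ^ 3 * (p.1 ^ 2 * p.2 ^ 2 / (l ^ 2 * p.1 ^ 2 + p.2 ^ 2) ^ ((3:ℝ)/2)))
      (fun p _ => hscale _ p (by positivity)), integral_const_mul]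
    congr 1
    rw [← hC]
    have h := unitDisc_swap_integral
      (fun p : ℝ × ℝ => p.1 ^ 2 * p.2 ^ 2 / (p.1 ^ 2 + l ^ 2 * p.2 ^ 2) ^ ((3:ℝ)/2))
    rw [← h]
    refine setIntegral_congr_fun hD fun p _ => ?_
    dsimp only
    rw [mul_comm (p.1 ^ 2) (p.2 ^ 2), add_comm (p.2 ^ 2)]
  -- denominator of Q₁ l⁻¹
  have hB1 : (∫ p in unitDisc, p.1 ^ 2 / (p.1 ^ 2 + (l⁻¹) ^ 2 * p.2 ^ 2) ^ ((3:ℝ)/2))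
      = l ^ 3 * I2 := by
    rw [setIntegral_congr_fun hD (g := fun p : ℝ × ℝ =>
        l ^ 3 * (p.1 ^ 2 / (l ^ 2 * p.1 ^ 2 + p.2 ^ 2) ^ ((3:ℝ)/2)))
      (fun p _ => hscale _ p (by positivity)), integral_const_mul]
    congr 1
    rw [← hDen]
    have h := unitDisc_swap_integral
      (fun p : ℝ × ℝ => p.2 ^ 2 / (p.1 ^ 2 + l ^ 2 * p.2 ^ 2) ^ ((3:ℝ)/2))
    rw [← h]
    refine setIntegral_congr_fun hD fun p _ => ?_
    dsimp only
    rw [add_comm (p.2 ^ 2)]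
  -- integrability of angular pieces
  have hint22 : IntegrableOn (fun θ => cos θ ^ 2 * sin θ ^ 2 / Y θ) (Ioo (-π) π) := by
    refine (((angular_cont hl (fun p => p.1 ^ 2 * p.2 ^ 2)
      (by fun_prop)).continuousOn.integrableOn_compact isCompact_Icc).mono_set
      Ioo_subset_Icc_self)
  have hint4 : IntegrableOn (fun θ => sin θ ^ 4 / Y θ) (Ioo (-π) π) := by
    refine (((angular_cont hl (fun p => p.2 ^ 4)
      (by fun_prop)).continuousOn.integrableOn_compact isCompact_Icc).mono_set
      Ioo_subset_Icc_self)
  have hint2 : IntegrableOn (fun θ => sin θ ^ 2 / Y θ) (Ioo (-π) π) := by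
    refine (((angular_cont hl (fun p => p.2 ^ 2)
      (by fun_prop)).continuousOn.integrableOn_compact isCompact_Icc).mono_set
      Ioo_subset_Icc_self)
  -- I2 = I22 + I4
  have hsum : I2 = I22 + I4 := by
    rw [hI2, show (∫ θ in Ioo (-π) π, sin θ ^ 2 / Y θ)
        = ∫ θ in Ioo (-π) π, (cos θ ^ 2 * sin θ ^ 2 / Y θ + sin θ ^ 4 / Y θ) from
      setIntegral_congr_fun measurableSet_Ioo fun θ _ => by
        rw [← add_div]
        congr 1
        nlinarith [sin_sq_add_cos_sq θ]]
    exact integral_add hint22 hint4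
  -- positivity of I2
  have hI2pos : 0 < I2 := by
    have hnn : ∀ θ, 0 ≤ sin θ ^ 2 / Y θ :=
      fun θ => div_nonneg (sq_nonneg _) (hYpos θ).le
    have h1 : (∫ θ in Ioo 0 π, sin θ ^ 2 / Y θ) ≤ I2 := by
      refine setIntegral_mono_set hint2 (Filter.Eventually.of_forall hnn) ?_
      exact (Ioo_subset_Ioo (by linarith [pi_pos]) le_rfl).eventuallyLE
    have h2 : 0 < ∫ θ in Ioo 0 π, sin θ ^ 2 / Y θ := by
      rw [← integral_Ioc_eq_integral_Ioo, ← intervalIntegral.integral_of_le pi_pos.le]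
      refine intervalIntegral.intervalIntegral_pos_of_pos_on ?_ ?_ pi_pos
      · exact ((angular_cont hl (fun p => p.2 ^ 2) (by fun_prop)).intervalIntegrable 0 π)
      · intro x hx
        exact div_pos (pow_pos (sin_pos_of_pos_of_lt_pi hx.1 hx.2) 2) (hYpos x)
    linarith
  -- final computation
  simp only [Q₁, Q₂]
  rw [hE, hDen, hN1, hB1]
  rw [show (3 : ℝ) * (l ^ 3 * (1/3 * I22)) = l ^ 3 * I22 by ring]
  rw [mul_div_mul_left I22 I2 hl3]
  rw [show (3 : ℝ) * (1/3 * I4) = I4 by ring]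
  field_simp
  linarith [hsum]
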